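/- Let p be an odd prime, n ≥ 1, and R a commutative ring in which p·1 = 0. Let A = (Z/p)[ξ_1, …, ξ_{n−1}]. For (Z/p)-algebra homomorphisms θ, θ' : A → R, let f = X + Σ_{i=1}^{n−1} θ(ξ_i) X^{p^i} and g = X + Σ_{j=1}^{n−1} θ'(ξ_j) X^{p^j}. Then the algebra homomorphism θ'' : A → R determined by θ''(ξ_k) = Σ_{i+j=k, i,j ≥ 0} θ(ξ_i)^{p^j} · θ'(ξ_j) (with the conventions ξ_0 = 1, θ(ξ_0) = θ'(ξ_0) = 1) satisfies X + Σ_{k=1}^{n−1} θ''(ξ_k) X^{p^k} ≡ g(f(X)) (mod X^{p^n}). In other words, under the bijection θ ↦ X + Σ θ(ξ_i) X^{p^i}, the convolution determined by the comultiplication Δ(ξ_k) = Σ_{i=0}^{k} ξ_{k−i}^{p^i} ⊗ ξ_i corresponds to composition of truncated polynomials. -/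

import Mathlib

open Polynomial

/-- `tval θ m` is `θ(ξ_m)`, with the convention `ξ_0 = 1` (so `tval θ 0 = 1`) and where
`ξ_{m+1}` is the `(m+1)`-st polynomial generator. -/
noncomputable def tval (p n : ℕ) (R : Type) [CommRing R] [Algebra (ZMod p) R]
    (θ : MvPolynomial (Fin (n - 1)) (ZMod p) →ₐ[ZMod p] R) : ℕ → R
  | 0 => 1
  | m + 1 => if h : m < n - 1 then θ (MvPolynomial.X (⟨m, h⟩ : Fin (n - 1))) else 0

lemma sum_antidiag_eq {M : Type*} [AddCommMonoid M] (n : ℕ) (T : ℕ → ℕ → M)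
    (h0 : ∀ i j, i < n → j < n → n ≤ i + j → T i j = 0) :
    ∑ k ∈ Finset.range n, ∑ ij ∈ Finset.HasAntidiagonal.antidiagonal k, T ij.1 ij.2
      = ∑ ij ∈ Finset.range n ×ˢ Finset.range n, T ij.1 ij.2 := by
  rw [← Finset.sum_filter_add_sum_filter_not (Finset.range n ×ˢ Finset.range n)
    (fun ij => ij.1 + ij.2 < n)]
  have h2 : ∑ ij ∈ (Finset.range n ×ˢ Finset.range n).filter (fun ij => ¬ ij.1 + ij.2 < n),
      T ij.1 ij.2 = 0 := by
    apply Finset.sum_eq_zero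
    intro ij hij
    simp only [Finset.mem_filter, Finset.mem_product, Finset.mem_range] at hij
    exact h0 _ _ hij.1.1 hij.1.2 (by omega)
  rw [h2, add_zero, Finset.sum_sigma']
  refine Finset.sum_bij' (fun x _ => x.2) (fun ij _ => ⟨ij.1 + ij.2, ij⟩) ?_ ?_ ?_ ?_ ?_
  · intro x hx
    simp only [Finset.mem_sigma, Finset.mem_range, Finset.HasAntidiagonal.mem_antidiagonal] at hx
    simp only [Finset.mem_filter, Finset.mem_product, Finset.mem_range]
    omega
  · intro ij hij
    simp only [Finset.mem_filter, Finset.mem_product, Finset.mem_range] at hij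
    simp only [Finset.mem_sigma, Finset.mem_range, Finset.HasAntidiagonal.mem_antidiagonal]
    exact ⟨hij.2, trivial⟩
  · intro x hx
    simp only [Finset.mem_sigma, Finset.mem_range, Finset.HasAntidiagonal.mem_antidiagonal] at hx
    exact Sigma.ext hx.2 HEq.rfl
  · intro ij hij; rfl
  · intro x hx; rfl

/-- For an odd prime `p`, `n ≥ 1`, and a commutative ring `R` with `p·1 = 0`
(a `Z/p`-algebra), let `A = (Z/p)[ξ_1, …, ξ_{n-1}]`, and for `(Z/p)`-algebra maps
`θ, θ' : A → R` put `f = X + Σ_{i=1}^{n-1} θ(ξ_i) X^(p^i)`,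
`g = X + Σ_{j=1}^{n-1} θ'(ξ_j) X^(p^j)`.  If `θ'' : A → R` is the algebra homomorphism with
`θ''(ξ_k) = Σ_{i+j=k} θ(ξ_i)^(p^j)·θ'(ξ_j)` (conventions `ξ_0 = 1`, `θ(ξ_0) = θ'(ξ_0) = 1`),
then `X + Σ_{k=1}^{n-1} θ''(ξ_k) X^(p^k) ≡ g(f(X))  (mod X^(p^n))`: the convolution coming
from `Δ(ξ_k) = Σ ξ_{k-i}^(p^i) ⊗ ξ_i` corresponds to composition of truncated polynomials. -/
theorem stmt_5 (p n : ℕ) (hp : p.Prime) (hodd : Odd p) (hn : 1 ≤ n)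
    (R : Type) [CommRing R] [Algebra (ZMod p) R]
    (θ θ' θ'' : MvPolynomial (Fin (n - 1)) (ZMod p) →ₐ[ZMod p] R)
    (f g : Polynomial R)
    (hf : f = X + ∑ i ∈ Finset.Ico 1 n, C (tval p n R θ i) * X ^ (p ^ i))
    (hg : g = X + ∑ j ∈ Finset.Ico 1 n, C (tval p n R θ' j) * X ^ (p ^ j))
    (hθ'' : ∀ k : Fin (n - 1),
      θ'' (MvPolynomial.X k) =
        ∑ ij ∈ Finset.HasAntidiagonal.antidiagonal ((k : ℕ) + 1),
          tval p n R θ ij.1 ^ (p ^ ij.2) * tval p n R θ' ij.2) :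
    Ideal.Quotient.mk (Ideal.span {(X : Polynomial R) ^ (p ^ n)})
      (X + ∑ k ∈ Finset.Ico 1 n, C (tval p n R θ'' k) * X ^ (p ^ k)) =
    Ideal.Quotient.mk (Ideal.span {(X : Polynomial R) ^ (p ^ n)}) (g.comp f) := by
  rcases subsingleton_or_nontrivial R with hR | hR
  · haveI : Subsingleton (Polynomial R) := inferInstance
    congr 1
    exact Subsingleton.elim _ _
  haveI : Fact p.Prime := ⟨hp⟩
  haveI : CharP R p := charP_of_injective_algebraMap' (ZMod p) (A := R) p
  haveI : CharP (Polynomial R) p := inferInstance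
  haveI : ExpChar (Polynomial R) p := ExpChar.prime hp
  set a := tval p n R θ with ha
  set b := tval p n R θ' with hb
  set c := tval p n R θ'' with hc
  -- convert Ico-sums to range-sums
  have hins : Finset.range n = insert 0 (Finset.Ico 1 n) := by
    ext x; simp [Finset.mem_Ico]; omega
  have key : ∀ u : ℕ → R, u 0 = 1 →
      (X : Polynomial R) + ∑ i ∈ Finset.Ico 1 n, C (u i) * X ^ (p ^ i)
        = ∑ i ∈ Finset.range n, C (u i) * X ^ (p ^ i) := by
    intro u hu
    rw [hins, Finset.sum_insert (by simp), hu]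
    simp
  have ha0 : a 0 = 1 := rfl
  have hb0 : b 0 = 1 := rfl
  have hc0 : c 0 = 1 := rfl
  rw [hf, hg, key a ha0, key b hb0, key c hc0]
  set q := Ideal.Quotient.mk (Ideal.span {(X : Polynomial R) ^ (p ^ n)}) with hq
  have hcomp : (∑ j ∈ Finset.range n, C (b j) * X ^ p ^ j).comp
      (∑ i ∈ Finset.range n, C (a i) * X ^ p ^ i)
      = ∑ j ∈ Finset.range n, ∑ i ∈ Finset.range n,
          C (a i ^ p ^ j * b j) * X ^ p ^ (i + j) := by
    rw [Polynomial.sum_comp]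
    refine Finset.sum_congr rfl fun j _ => ?_
    rw [mul_comp, C_comp, pow_comp, X_comp, sum_pow_char_pow, Finset.mul_sum]
    refine Finset.sum_congr rfl fun i _ => ?_
    rw [mul_pow, ← pow_mul, ← pow_add, ← C_pow, C_mul]
    ring
  rw [hcomp]
  have hck : ∀ k, k < n → c k = ∑ ij ∈ Finset.HasAntidiagonal.antidiagonal k, a ij.1 ^ p ^ ij.2 * b ij.2 := by
    intro k hk
    match k with
    | 0 => simp [hc0, ha0, hb0]
    | m + 1 =>
      have hm : m < n - 1 := by omega
      have h1 := hθ'' ⟨m, hm⟩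
      simp only [Fin.val_mk] at h1
      show tval p n R θ'' (m + 1) = _
      rw [show tval p n R θ'' (m + 1)
        = if h : m < n - 1 then θ'' (MvPolynomial.X (⟨m, h⟩ : Fin (n - 1))) else 0 from rfl,
        dif_pos hm, h1]
  have hvan : ∀ i j : ℕ, i < n → j < n → n ≤ i + j →
      q (C (a i ^ p ^ j * b j) * X ^ p ^ (i + j)) = 0 := by
    intro i j _ _ hij
    rw [hq, Ideal.Quotient.eq_zero_iff_mem, Ideal.mem_span_singleton]
    exact Dvd.dvd.mul_left (pow_dvd_pow X (Nat.pow_le_pow_right hp.pos hij)) _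
  calc q (∑ k ∈ Finset.range n, C (c k) * X ^ p ^ k)
      = ∑ k ∈ Finset.range n, ∑ ij ∈ Finset.HasAntidiagonal.antidiagonal k,
          q (C (a ij.1 ^ p ^ ij.2 * b ij.2) * X ^ p ^ (ij.1 + ij.2)) := by
        rw [map_sum]
        refine Finset.sum_congr rfl fun k hk => ?_
        rw [hck k (Finset.mem_range.mp hk), map_sum C _ _, Finset.sum_mul, map_sum]
        refine Finset.sum_congr rfl fun ij hij => ?_
        rw [Finset.HasAntidiagonal.mem_antidiagonal.mp hij]
    _ = ∑ ij ∈ Finset.range n ×ˢ Finset.range n,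
          q (C (a ij.1 ^ p ^ ij.2 * b ij.2) * X ^ p ^ (ij.1 + ij.2)) :=
        sum_antidiag_eq n _ (fun i j h1 h2 h3 => hvan i j h1 h2 h3)
    _ = q (∑ j ∈ Finset.range n, ∑ i ∈ Finset.range n,
          C (a i ^ p ^ j * b j) * X ^ p ^ (i + j)) := by
        rw [Finset.sum_product, map_sum]
        rw [Finset.sum_comm]
        refine Finset.sum_congr rfl fun j _ => ?_
        rw [map_sum]
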